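/- arXiv:1607.03591 — 5 statements merged into one kernel-verified Lean document; each statement's English description precedes it below -/
import Mathlib

section
/- Let μ be a Gaussian measure on a separable Banach space W. Then the inclusion of W* into L²(W, μ) is a compact operator: for every sequence (f_n) in W* with ‖f_n‖_{W*} ≤ 1 for all n, there exists a subsequence (f_{n_k}) and an f ∈ W* such that f_{n_k} → f in the norm of L²(W, μ). -/
open MeasureTheory ProbabilityTheory Filter
open scoped NNReal ENNReal Topology

/-- A Borel probability measure on a separable Banach space is Gaussian if every
continuous linear functional, viewed as a random variable, has a centered Gaussian
distribution (possibly degenerate, i.e. a Dirac mass at `0`). -/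
def IsGaussianMeasure {W : Type*} [NormedAddCommGroup W] [NormedSpace ℝ W]
    [MeasurableSpace W] (μ : Measure W) : Prop :=
  IsProbabilityMeasure μ ∧ ∀ f : W →L[ℝ] ℝ, ∃ v : ℝ≥0, μ.map f = gaussianReal 0 v

lemma L2cpt_seq_alaoglu {W : Type*} [NormedAddCommGroup W] [NormedSpace ℝ W]
    [SecondCountableTopology W]
    (f : ℕ → W →L[ℝ] ℝ) (hf : ∀ n, ‖f n‖ ≤ 1) :
    ∃ (g : W →L[ℝ] ℝ) (φ : ℕ → ℕ), StrictMono φ ∧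
      ∀ x, Tendsto (fun k => f (φ k) x) atTop (𝓝 (g x)) := by
  haveI : Nonempty W := ⟨0⟩
  obtain ⟨d, hd⟩ := TopologicalSpace.exists_dense_seq W
  have hfd : ∀ n x, ‖f n x‖ ≤ ‖x‖ := by
    intro n x
    calc ‖f n x‖ ≤ ‖f n‖ * ‖x‖ := (f n).le_opNorm x
      _ ≤ 1 * ‖x‖ := mul_le_mul_of_nonneg_right (hf n) (norm_nonneg x)
      _ = ‖x‖ := one_mul _
  set S : Set (ℕ → ℝ) := Set.pi Set.univ fun i => Set.Icc (-‖d i‖) (‖d i‖) with hS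
  have hScomp : IsCompact S := isCompact_univ_pi fun i => isCompact_Icc
  have hmem : ∀ n, (fun i => f n (d i)) ∈ S := by
    intro n
    refine Set.mem_univ_pi.mpr fun i => ?_
    have := hfd n (d i)
    rw [Real.norm_eq_abs] at this
    exact Set.mem_Icc.mpr (abs_le.mp this)
  obtain ⟨a, -, φ, hφ, hconv⟩ := hScomp.tendsto_subseq hmem
  have hcoord : ∀ i, Tendsto (fun k => f (φ k) (d i)) atTop (𝓝 (a i)) := by
    intro i
    exact (tendsto_pi_nhds.mp hconv i)
  have key : ∀ x : W, CauchySeq fun k => f (φ k) x := by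
    intro x
    rw [Metric.cauchySeq_iff]
    intro ε hε
    obtain ⟨i, hi⟩ := hd.exists_dist_lt x (show (0:ℝ) < ε/4 by linarith)
    obtain ⟨N, hN⟩ := Metric.cauchySeq_iff.mp (hcoord i).cauchySeq (ε/2) (by linarith)
    refine ⟨N, fun m hm n hn => ?_⟩
    have hb : ∀ j, dist (f (φ j) x) (f (φ j) (d i)) < ε/4 := by
      intro j
      rw [Real.dist_eq, ← map_sub]
      calc |f (φ j) (x - d i)| ≤ ‖x - d i‖ := hfd (φ j) _
        _ = dist x (d i) := (dist_eq_norm x (d i)).symm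
        _ < ε/4 := hi
    calc dist (f (φ m) x) (f (φ n) x)
        ≤ dist (f (φ m) x) (f (φ m) (d i)) + dist (f (φ m) (d i)) (f (φ n) (d i))
          + dist (f (φ n) (d i)) (f (φ n) x) := dist_triangle4 _ _ _ _
      _ < ε/4 + ε/2 + ε/4 := by
          have := hb m
          have := hb n
          have := hN m hm n hn
          rw [dist_comm (f (φ n) (d i))] at *
          linarith [hb m, hb n, hN m hm n hn]
      _ = ε := by ring
  have hlim : ∀ x : W, ∃ l, Tendsto (fun k => f (φ k) x) atTop (𝓝 l) :=
    fun x => cauchySeq_tendsto_of_complete (key x)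
  choose G hG using hlim
  have hadd : ∀ x y, G (x + y) = G x + G y := by
    intro x y
    refine tendsto_nhds_unique (hG (x + y)) ?_
    have := (hG x).add (hG y)
    simpa using this
  have hsmul : ∀ (c : ℝ) x, G (c • x) = c • G x := by
    intro c x
    refine tendsto_nhds_unique (hG (c • x)) ?_
    have := (hG x).const_smul c
    simpa using this
  have hbound : ∀ x, ‖G x‖ ≤ 1 * ‖x‖ := by
    intro x
    refine le_of_tendsto (hG x).norm (Eventually.of_forall fun k => ?_)
    simpa using hfd (φ k) x
  refine ⟨LinearMap.mkContinuous ⟨⟨G, hadd⟩, hsmul⟩ 1 hbound, φ, hφ, fun x => hG x⟩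

lemma L2cpt_gauss_scale (v : ℝ≥0) :
    gaussianReal 0 v = (gaussianReal 0 1).map (fun z => Real.sqrt v * z) := by
  have h := gaussianReal_map_const_mul (μ := 0) (v := 1) (Real.sqrt v)
  have h2 : (⟨(Real.sqrt v) ^ 2, sq_nonneg _⟩ : ℝ≥0) * 1 = v := by
    ext
    simp [Real.sq_sqrt v.coe_nonneg]
  rw [mul_zero] at h
  rw [h]
  congr 1
  exact h2.symm

-- L2cpt_transfer: for a CLM T with μ.map T = gaussianReal 0 v, and continuous F,
-- ∫ F (T x) ∂μ = ∫ F (√v z) ∂(gaussianReal 0 1)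
lemma L2cpt_transfer {W : Type*} [NormedAddCommGroup W] [NormedSpace ℝ W]
    [MeasurableSpace W] [BorelSpace W] (μ : Measure W)
    (T : W →L[ℝ] ℝ) (v : ℝ≥0) (hT : μ.map T = gaussianReal 0 v)
    (F : ℝ → ℝ) (hF : Continuous F) :
    ∫ x, F (T x) ∂μ = ∫ z, F (Real.sqrt v * z) ∂(gaussianReal 0 1) := by
  have h1 : ∫ x, F (T x) ∂μ = ∫ y, F y ∂(μ.map T) :=
    (integral_map T.continuous.measurable.aemeasurable hF.aestronglyMeasurable).symm
  rw [h1, hT, L2cpt_gauss_scale v,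
    integral_map (measurable_const_mul _).aemeasurable hF.aestronglyMeasurable]

lemma L2cpt_tail_pos : 0 < ((gaussianReal 0 1) {z : ℝ | 1 ≤ |z|}).toReal := by
  refine ENNReal.toReal_pos ?_ (measure_ne_top _ _)
  intro h0
  have habs : (volume : Measure ℝ) ≪ gaussianReal 0 1 :=
    gaussianReal_absolutelyContinuous' 0 one_ne_zero
  have hz : (volume : Measure ℝ) {z : ℝ | 1 ≤ |z|} = 0 := habs h0
  have hsub : Set.Ici (1:ℝ) ⊆ {z : ℝ | 1 ≤ |z|} := fun z hz => le_trans hz (le_abs_self z)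
  have := measure_mono_null hsub hz
  rw [Real.volume_Ici] at this
  exact ENNReal.top_ne_zero this

-- upper bound on ∫ exp (-(v * z^2))
lemma L2cpt_exp_bound (v : ℝ≥0) :
    ∫ z, Real.exp (-((v : ℝ) * z ^ 2)) ∂(gaussianReal 0 1)
      ≤ 1 - ((gaussianReal 0 1) {z : ℝ | 1 ≤ |z|}).toReal * (1 - Real.exp (-(v : ℝ))) := by
  set ν := gaussianReal 0 1
  haveI : IsProbabilityMeasure ν := inferInstance
  set S : Set ℝ := {z : ℝ | 1 ≤ |z|} with hSdef
  have hS : MeasurableSet S := (isClosed_le continuous_const continuous_abs).measurableSet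
  have int1 : Integrable (fun z => Real.exp (-((v : ℝ) * z ^ 2))) ν := by
    refine Integrable.mono' (integrable_const 1)
      (Continuous.aestronglyMeasurable (by continuity)) (ae_of_all _ fun z => ?_)
    rw [Real.norm_eq_abs, Real.abs_exp]
    exact Real.exp_le_one_iff.mpr (by nlinarith [sq_nonneg z, v.coe_nonneg])
  have int2 : Integrable (fun z => (1:ℝ) - S.indicator (fun _ => 1 - Real.exp (-(v:ℝ))) z) ν :=
    (integrable_const 1).sub ((integrable_const _).indicator hS)
  have hmono : ∫ z, Real.exp (-((v : ℝ) * z ^ 2)) ∂ν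
      ≤ ∫ z, ((1:ℝ) - S.indicator (fun _ => 1 - Real.exp (-(v:ℝ))) z) ∂ν := by
    refine integral_mono_ae int1 int2 (ae_of_all _ fun z => ?_)
    simp only []
    by_cases hz : z ∈ S
    · rw [Set.indicator_of_mem hz]
      have h1 : (1:ℝ) ≤ z ^ 2 := by
        have : (1:ℝ) ≤ |z| := hz
        nlinarith [sq_abs z]
      have : Real.exp (-((v : ℝ) * z ^ 2)) ≤ Real.exp (-(v:ℝ)) := by
        apply Real.exp_le_exp.mpr
        have : (v:ℝ) * 1 ≤ (v:ℝ) * z ^ 2 := by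
          exact mul_le_mul_of_nonneg_left h1 v.coe_nonneg
        linarith
      linarith
    · rw [Set.indicator_of_notMem hz]
      have : Real.exp (-((v : ℝ) * z ^ 2)) ≤ 1 :=
        Real.exp_le_one_iff.mpr (by nlinarith [sq_nonneg z, v.coe_nonneg])
      linarith
  have hcomp : ∫ z, ((1:ℝ) - S.indicator (fun _ => 1 - Real.exp (-(v:ℝ))) z) ∂ν
      = 1 - (ν S).toReal * (1 - Real.exp (-(v:ℝ))) := by
    rw [integral_sub (integrable_const 1) ((integrable_const _).indicator hS),
      integral_const, integral_indicator_const _ hS]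
    simp [measure_univ]
    exact Or.inl rfl
  rw [hcomp] at hmono
  exact hmono

/-- For a Gaussian measure `μ` on a separable Banach space `W`, the inclusion
`W* ↪ L²(W, μ)` is a compact operator: every sequence in the unit ball of `W*`
has a subsequence converging in `L²(W, μ)` to an element of `W*`. -/
theorem dual_inclusion_into_L2_compact
    {W : Type*} [NormedAddCommGroup W] [NormedSpace ℝ W] [CompleteSpace W]
    [SecondCountableTopology W] [MeasurableSpace W] [BorelSpace W]
    (μ : Measure W) (hμ : IsGaussianMeasure μ)
    (f : ℕ → W →L[ℝ] ℝ) (hf : ∀ n, ‖f n‖ ≤ 1) :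
    ∃ (g : W →L[ℝ] ℝ) (φ : ℕ → ℕ), StrictMono φ ∧
      Tendsto (fun k => ∫ x, (f (φ k) x - g x) ^ 2 ∂μ) atTop (𝓝 0) := by
  haveI : IsProbabilityMeasure μ := hμ.1
  obtain ⟨g, φ, hφ, hpt⟩ := L2cpt_seq_alaoglu f hf
  refine ⟨g, φ, hφ, ?_⟩
  -- the subsequence minus limit, as CLMs
  have hv : ∀ k, ∃ v : ℝ≥0, μ.map (f (φ k) - g) = gaussianReal 0 v := fun k => hμ.2 _
  choose v hv using hv
  set ν := gaussianReal 0 1 with hν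
  set P := (ν {z : ℝ | 1 ≤ |z|}).toReal with hP
  -- pointwise convergence to 0
  have hpt0 : ∀ x, Tendsto (fun k => f (φ k) x - g x) atTop (𝓝 0) := by
    intro x
    simpa using (hpt x).sub (tendsto_const_nhds (x := g x))
  -- Step A: ∫ exp(-(h_k)^2) → 1 by dominated convergence
  have hI : Tendsto (fun k => ∫ x, Real.exp (-(f (φ k) x - g x) ^ 2) ∂μ) atTop (𝓝 1) := by
    have hDC := tendsto_integral_of_dominated_convergence (μ := μ)
      (F := fun k x => Real.exp (-(f (φ k) x - g x) ^ 2))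
      (f := fun _ => (1:ℝ)) (bound := fun _ => (1:ℝ))
      (fun k => (show Continuous (fun x => Real.exp (-(f (φ k) x - g x) ^ 2)) from Real.continuous_exp.comp (((f (φ k)).continuous.sub g.continuous).pow 2).neg).aestronglyMeasurable)
      (integrable_const 1)
      (fun k => ae_of_all _ fun x => by
        rw [Real.norm_eq_abs, Real.abs_exp]
        exact Real.exp_le_one_iff.mpr (by nlinarith [sq_nonneg (f (φ k) x - g x)]))
      (ae_of_all _ fun x => by
        have hc : Continuous fun t : ℝ => Real.exp (-t ^ 2) := Real.continuous_exp.comp (continuous_pow 2).neg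
        have := (hc.tendsto 0).comp (hpt0 x)
        simpa [Function.comp_def] using this)
    simpa using hDC
  -- identify the integrals via the Gaussian structure
  have hIeq : ∀ k, ∫ x, Real.exp (-(f (φ k) x - g x) ^ 2) ∂μ
      = ∫ z, Real.exp (-((v k : ℝ) * z ^ 2)) ∂ν := by
    intro k
    have := L2cpt_transfer μ (f (φ k) - g) (v k) (hv k) (fun t => Real.exp (-t ^ 2)) (Real.continuous_exp.comp (continuous_pow 2).neg)
    simp only [ContinuousLinearMap.sub_apply] at this
    rw [this]
    congr 1
    funext z
    rw [mul_pow, Real.sq_sqrt (v k).coe_nonneg]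
  -- squeeze : 1 - exp(-v k) → 0
  have hsq : Tendsto (fun k => 1 - Real.exp (-(v k : ℝ))) atTop (𝓝 0) := by
    have hub : ∀ k, 1 - Real.exp (-(v k : ℝ))
        ≤ (1 - ∫ x, Real.exp (-(f (φ k) x - g x) ^ 2) ∂μ) / P := by
      intro k
      rw [le_div_iff₀ L2cpt_tail_pos]
      have := L2cpt_exp_bound (v k)
      rw [← hIeq k] at this
      linarith
    have hlb : ∀ k, 0 ≤ 1 - Real.exp (-(v k : ℝ)) := by
      intro k
      have : Real.exp (-(v k : ℝ)) ≤ 1 := Real.exp_le_one_iff.mpr (by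
        simpa using (v k).coe_nonneg)
      linarith
    have htend : Tendsto (fun k => (1 - ∫ x, Real.exp (-(f (φ k) x - g x) ^ 2) ∂μ) / P)
        atTop (𝓝 0) := by
      have := ((tendsto_const_nhds (x := (1:ℝ))).sub hI).div_const P
      simpa using this
    exact squeeze_zero hlb hub htend
  have hexp : Tendsto (fun k => Real.exp (-(v k : ℝ))) atTop (𝓝 1) := by
    have := (tendsto_const_nhds (x := (1:ℝ))).sub hsq
    simpa using this
  have hv0 : Tendsto (fun k => ((v k : ℝ))) atTop (𝓝 0) := by
    have hlog := ((Real.continuousAt_log one_ne_zero).tendsto.comp hexp).neg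
    simp only [Real.log_one, neg_zero] at hlog
    have : (fun k => -Real.log (Real.exp (-(v k : ℝ)))) = fun k => ((v k : ℝ)) := by
      funext k
      rw [Real.log_exp, neg_neg]
    rwa [← this]
  -- Step B: ∫ h_k² = v_k * M
  have hM : ∀ k, ∫ x, (f (φ k) x - g x) ^ 2 ∂μ = (v k : ℝ) * ∫ z, z ^ 2 ∂ν := by
    intro k
    have := L2cpt_transfer μ (f (φ k) - g) (v k) (hv k) (fun t => t ^ 2) (continuous_pow 2)
    simp only [ContinuousLinearMap.sub_apply] at this
    rw [this]
    have : (fun z => (Real.sqrt (v k) * z) ^ 2) = fun z => (v k : ℝ) * z ^ 2 := by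
      funext z
      rw [mul_pow, Real.sq_sqrt (v k).coe_nonneg]
    rw [this, integral_const_mul]
  have : Tendsto (fun k => (v k : ℝ) * ∫ z, z ^ 2 ∂ν) atTop (𝓝 0) := by
    have := hv0.mul_const (∫ z, z ^ 2 ∂ν)
    simpa using this
  simpa only [hM] using this
end

section
/- Let μ be a Gaussian measure on a separable Banach space W, with covariance form q(f,g) = ∫_W f(x)·g(x) μ(dx) for f, g ∈ W*, and assume μ is non-degenerate, i.e. q(f,f) = 0 implies f = 0. If W* is complete with respect to the norm f ↦ √(q(f,f)) (equivalently, W* is a closed subspace of L²(W, μ)), then W is finite-dimensional. -/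
open MeasureTheory ProbabilityTheory Filter
open scoped RealInnerProductSpace
open scoped NNReal ENNReal Topology

lemma aux_pdf_le (v : ℝ≥0) (y : ℝ) :
    gaussianPDFReal 0 v y ≤ (Real.sqrt (2 * Real.pi * v))⁻¹ := by
  simp only [gaussianPDFReal]
  have h1 : Real.exp (-(y - 0) ^ 2 / (2 * (v:ℝ))) ≤ 1 := by
    rw [Real.exp_le_one_iff]
    apply div_nonpos_of_nonpos_of_nonneg
    · simp [sq_nonneg]
    · positivity
  have h2 : (0:ℝ) ≤ (Real.sqrt (2 * Real.pi * v))⁻¹ := by positivity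
  calc (Real.sqrt (2 * Real.pi * v))⁻¹ * Real.exp (-(y - 0) ^ 2 / (2 * (v:ℝ)))
      ≤ (Real.sqrt (2 * Real.pi * v))⁻¹ * 1 := by
        exact mul_le_mul_of_nonneg_left h1 h2
    _ = _ := mul_one _

lemma aux_pdf_ge {v : ℝ≥0} (hv : v ≠ 0) {y : ℝ} (hy : y ∈ Set.Icc (1:ℝ) 2) :
    (Real.sqrt (2 * Real.pi * v))⁻¹ * Real.exp (-4 / (2 * (v:ℝ))) ≤ gaussianPDFReal 0 v y := by
  simp only [gaussianPDFReal]
  have hvpos : (0:ℝ) < (v:ℝ) := lt_of_le_of_ne (by positivity) (by exact_mod_cast (Ne.symm hv))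
  apply mul_le_mul_of_nonneg_left ?_ (by positivity)
  rw [Real.exp_le_exp]
  apply div_le_div_of_nonneg_right ?_ (by positivity)
  obtain ⟨h1, h2⟩ := hy
  nlinarith

lemma aux_gr_Icc_pos {v : ℝ≥0} (hv : v ≠ 0) : 0 < gaussianReal 0 v (Set.Icc 1 2) := by
  rw [gaussianReal_apply_eq_integral 0 hv]
  rw [ENNReal.ofReal_pos]
  set c₀ := (Real.sqrt (2 * Real.pi * v))⁻¹ * Real.exp (-4 / (2 * (v:ℝ))) with hc₀
  have hc₀pos : 0 < c₀ := by
    have hvpos : (0:ℝ) < (v:ℝ) := lt_of_le_of_ne (by positivity) (by exact_mod_cast (Ne.symm hv))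
    positivity
  have hle : ∫ y in Set.Icc (1:ℝ) 2, c₀ ≤ ∫ y in Set.Icc (1:ℝ) 2, gaussianPDFReal 0 v y := by
    apply setIntegral_mono_on
    · exact integrableOn_const (by simp) (by simp)
    · exact (integrable_gaussianPDFReal 0 v).integrableOn
    · exact measurableSet_Icc
    · exact fun y hy => aux_pdf_ge hv hy
  have hconst : ∫ y in Set.Icc (1:ℝ) 2, c₀ = c₀ := by
    rw [setIntegral_const]
    simp [Real.volume_Icc]
    ring
  linarith [hle, hconst ▸ hle]

lemma aux_int_sq (v : ℝ≥0) : Integrable (fun y : ℝ => y ^ 2) (gaussianReal 0 v) := by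
  by_cases hv : v = 0
  · subst hv
    rw [gaussianReal_zero_var]
    apply (integrable_zero _ _ _).congr
    rw [Filter.EventuallyEq, MeasureTheory.ae_dirac_eq]
    simp
  · rw [gaussianReal_of_var_ne_zero 0 hv]
    rw [integrable_withDensity_iff_integrable_smul' (measurable_gaussianPDF 0 v)
      (Filter.Eventually.of_forall fun x => ENNReal.ofReal_lt_top)]
    have hvpos : (0:ℝ) < (v:ℝ) := lt_of_le_of_ne (by positivity) (by exact_mod_cast (Ne.symm hv))
    have hb : (0:ℝ) < (2 * (v:ℝ))⁻¹ := by positivity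
    have key : Integrable (fun x : ℝ => x ^ (2:ℕ) * Real.exp (-(2 * (v:ℝ))⁻¹ * x ^ 2)) volume := by
      have h := integrable_rpow_mul_exp_neg_mul_sq hb (s := 2) (by norm_num)
      have h2 : ∀ x : ℝ, x ^ (2:ℝ) = x ^ (2:ℕ) := fun x => by
        rw [← Real.rpow_natCast x 2]; norm_num
      simpa only [h2] using h
    have heq : (fun x : ℝ => (gaussianPDF 0 v x).toReal • x ^ 2)
        = fun x : ℝ => (Real.sqrt (2 * Real.pi * v))⁻¹ *
          (x ^ (2:ℕ) * Real.exp (-(2 * (v:ℝ))⁻¹ * x ^ 2)) := by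
      funext x
      rw [gaussianPDF, ENNReal.toReal_ofReal (gaussianPDFReal_nonneg _ _ _), smul_eq_mul]
      simp only [gaussianPDFReal]
      rw [show -(x - 0:ℝ) ^ 2 / (2 * (v:ℝ)) = -(2 * (v:ℝ))⁻¹ * x ^ 2 by ring]
      ring
    rw [heq]
    exact key.const_mul _

lemma aux_sq_integral (v : ℝ≥0) :
    ∫ y, y ^ 2 ∂(gaussianReal 0 v) = (∫ y, y ^ 2 ∂(gaussianReal 0 1)) * v := by
  by_cases hv : v = 0
  · subst hv
    rw [gaussianReal_zero_var]
    simp [integral_dirac]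
  · have hmap := gaussianReal_map_const_mul (μ := 0) (v := 1) (Real.sqrt v)
    have h2 : (⟨(Real.sqrt v) ^ 2, sq_nonneg _⟩ : ℝ≥0) * 1 = v := by
      ext
      simp [Real.sq_sqrt v.2]
    rw [mul_zero] at hmap; replace hmap := hmap.trans (congrArg (gaussianReal 0) h2)
    rw [← hmap, integral_map (by fun_prop) (by fun_prop)]
    simp_rw [mul_pow]
    rw [MeasureTheory.integral_const_mul]
    have hs : (Real.sqrt (v:ℝ)) ^ 2 = (v:ℝ) := Real.sq_sqrt (by positivity)
    rw [hs]
    ring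


section AuxJ

variable {W : Type*} [NormedAddCommGroup W] [NormedSpace ℝ W]
  [MeasurableSpace W] [BorelSpace W] (μ : Measure W)

noncomputable def auxJ (hmem : ∀ f : W →L[ℝ] ℝ, MemLp (⇑f) 2 μ) :
    (W →L[ℝ] ℝ) →ₗ[ℝ] Lp ℝ 2 μ where
  toFun f := (hmem f).toLp ⇑f
  map_add' f g := MemLp.toLp_add (hmem f) (hmem g)
  map_smul' c f := MemLp.toLp_const_smul c (hmem f)

lemma auxJ_norm_sq (hmem : ∀ f : W →L[ℝ] ℝ, MemLp (⇑f) 2 μ) (f : W →L[ℝ] ℝ) :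
    ‖auxJ μ hmem f‖ ^ 2 = ∫ x, (f x) ^ 2 ∂μ := by
  have h1 : ⟪auxJ μ hmem f, auxJ μ hmem f⟫ = ∫ a, (auxJ μ hmem f : Lp ℝ 2 μ) a * (auxJ μ hmem f) a ∂μ := by
    rw [L2.inner_def]; rfl
  have h2 : (∫ a, (auxJ μ hmem f : Lp ℝ 2 μ) a * (auxJ μ hmem f) a ∂μ) = ∫ x, f x * f x ∂μ := by
    apply integral_congr_ae
    filter_upwards [(hmem f).coeFn_toLp] with x hx
    rw [show ⇑(auxJ μ hmem f) = ⇑((hmem f).toLp ⇑f) from rfl, hx]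
  rw [← real_inner_self_eq_norm_sq, h1, h2]
  simp_rw [pow_two]

end AuxJ

set_option maxHeartbeats 2000000 in
/-- If `μ` is a non-degenerate Gaussian measure on a separable Banach space `W`
(the covariance form `q(f,f) = ∫ (f x)² dμ` vanishes only for `f = 0`), and `W*` is
complete in the norm `f ↦ √(q(f,f))` induced by `L²(W,μ)` (i.e. every `L²(μ)`-Cauchy
sequence in `W*` converges in `L²(μ)` to an element of `W*`), then `W` is
finite-dimensional. -/
theorem finiteDimensional_of_dual_complete_in_L2
    {W : Type*} [NormedAddCommGroup W] [NormedSpace ℝ W] [CompleteSpace W]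
    [SecondCountableTopology W] [MeasurableSpace W] [BorelSpace W]
    (μ : Measure W) (hμ : IsGaussianMeasure μ)
    (hnd : ∀ f : W →L[ℝ] ℝ, ∫ x, (f x) ^ 2 ∂μ = 0 → f = 0)
    (hcomplete : ∀ f : ℕ → W →L[ℝ] ℝ,
      (∀ ε > (0 : ℝ), ∃ N, ∀ m ≥ N, ∀ n ≥ N, ∫ x, (f m x - f n x) ^ 2 ∂μ < ε) →
      ∃ g : W →L[ℝ] ℝ, Tendsto (fun n => ∫ x, (f n x - g x) ^ 2 ∂μ) atTop (𝓝 0)) :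
    FiniteDimensional ℝ W := by
  classical
  obtain ⟨hprob, hgauss⟩ := hμ
  haveI := hprob
  choose v hv using hgauss
  set m : ℝ := ∫ y, y ^ 2 ∂(gaussianReal 0 1) with hm
  -- the integral of `f²` equals `m * v f`
  have hI : ∀ f : W →L[ℝ] ℝ, ∫ x, (f x) ^ 2 ∂μ = m * v f := by
    intro f
    have h1 : ∫ x, (f x) ^ 2 ∂μ = ∫ y, y ^ 2 ∂(μ.map f) := by
      rw [integral_map f.continuous.measurable.aemeasurable
        (by fun_prop : AEStronglyMeasurable (fun y : ℝ => y ^ 2) (μ.map f))]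
    rw [h1, hv f, aux_sq_integral, ← hm, mul_comm]
  have hInt : ∀ f : W →L[ℝ] ℝ, Integrable (fun x => (f x) ^ 2) μ := by
    intro f
    have h := aux_int_sq (v f)
    rw [← hv f] at h
    exact (integrable_map_measure (by fun_prop) f.continuous.measurable.aemeasurable).mp h
  have hm0 : 0 ≤ m := integral_nonneg fun y => sq_nonneg y
  have hmpos : 0 < m := by
    rcases hm0.lt_or_eq with h | h
    · exact h
    exfalso
    have hz : (fun y : ℝ => y ^ 2) =ᵐ[gaussianReal 0 1] 0 :=
      (integral_eq_zero_iff_of_nonneg (fun y => sq_nonneg y) (aux_int_sq 1)).mp h.symm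
    have hz2 : gaussianReal 0 1 {y : ℝ | ¬ (y ^ 2 = (0:ℝ))} = 0 := by
      have := hz
      rw [Filter.EventuallyEq, ae_iff] at this
      simpa using this
    have hsub : Set.Icc (1:ℝ) 2 ⊆ {y : ℝ | ¬ (y ^ 2 = (0:ℝ))} := by
      intro y hy
      obtain ⟨h1, _⟩ := hy
      simp only [Set.mem_setOf_eq]
      positivity
    have := measure_mono (μ := gaussianReal 0 1) hsub
    rw [hz2] at this
    exact absurd (le_antisymm this (zero_le)) (aux_gr_Icc_pos one_ne_zero).ne'
  -- choose a radius capturing 3/4 of the mass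
  obtain ⟨R, hR0, hR⟩ : ∃ R : ℝ, 0 ≤ R ∧ (3/4 : ℝ≥0∞) ≤ μ {x : W | ‖x‖ ≤ R} := by
    have hmono : Monotone (fun n : ℕ => {x : W | ‖x‖ ≤ (n:ℝ)}) := by
      intro a b hab x hx
      have hx' : ‖x‖ ≤ (a:ℝ) := hx
      have : ‖x‖ ≤ (b:ℝ) := le_trans hx' (by exact_mod_cast hab)
      exact this
    have hun : (⋃ n : ℕ, {x : W | ‖x‖ ≤ (n:ℝ)}) = Set.univ := by
      ext x
      simp only [Set.mem_iUnion, Set.mem_univ, iff_true, Set.mem_setOf_eq]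
      exact exists_nat_ge ‖x‖
    have ht := tendsto_measure_iUnion_atTop (μ := μ) hmono
    rw [hun] at ht
    have h34 : (3/4 : ℝ≥0∞) < μ Set.univ := by
      rw [measure_univ]
      rw [ENNReal.div_lt_iff (by norm_num) (by norm_num)]
      norm_num
    obtain ⟨n, hn⟩ := (ht.eventually_const_le h34).exists
    exact ⟨n, Nat.cast_nonneg n, hn⟩
  -- bound on the variances
  have hVB : ∀ f : W →L[ℝ] ℝ, (v f : ℝ) ≤ (8/3 * (‖f‖ * R)) ^ 2 := by
    intro f
    by_cases hv0 : v f = 0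
    · rw [hv0]
      positivity
    · set a := ‖f‖ * R with ha
      have ha0 : 0 ≤ a := mul_nonneg (norm_nonneg f) hR0
      have hvpos : (0:ℝ) < (v f : ℝ) := lt_of_le_of_ne (by positivity) (by exact_mod_cast (Ne.symm hv0))
      have hsub : {x : W | ‖x‖ ≤ R} ⊆ ⇑f ⁻¹' (Set.Icc (-a) a) := by
        intro x hx
        simp only [Set.mem_preimage, Set.mem_Icc, ← abs_le]
        calc |f x| = ‖f x‖ := (Real.norm_eq_abs _).symm
          _ ≤ ‖f‖ * ‖x‖ := f.le_opNorm x
          _ ≤ ‖f‖ * R := mul_le_mul_of_nonneg_left hx (norm_nonneg f)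
      have hkey : (3/4 : ℝ≥0∞) ≤ (μ.map ⇑f) (Set.Icc (-a) a) := by
        rw [Measure.map_apply f.continuous.measurable measurableSet_Icc]
        exact le_trans hR (measure_mono hsub)
      rw [hv f, gaussianReal_apply_eq_integral 0 hv0] at hkey
      set s := Real.sqrt (2 * Real.pi * (v f)) with hs
      have hspos : 0 < s := Real.sqrt_pos.mpr (by positivity)
      have hint : ∫ y in Set.Icc (-a) a, gaussianPDFReal 0 (v f) y ≤ 2 * a * s⁻¹ := by
        calc ∫ y in Set.Icc (-a) a, gaussianPDFReal 0 (v f) y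
            ≤ ∫ _ in Set.Icc (-a) a, s⁻¹ :=
              setIntegral_mono_on ((integrable_gaussianPDFReal _ _).integrableOn)
                (integrableOn_const (by simp) (by simp))
                measurableSet_Icc (fun y _ => aux_pdf_le _ y)
          _ = (volume (Set.Icc (-a) a)).toReal * s⁻¹ := by
              rw [setIntegral_const, smul_eq_mul]; rfl
          _ ≤ 2 * a * s⁻¹ := by
              rw [Real.volume_Icc, ENNReal.toReal_ofReal (by linarith)]
              apply mul_le_mul_of_nonneg_right (by linarith) (by positivity)
      have h34 : (3/4 : ℝ) ≤ 2 * a * s⁻¹ := by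
        have h1 := le_trans hkey (ENNReal.ofReal_le_ofReal hint)
        have h2 : (3/4:ℝ≥0∞) = ENNReal.ofReal (3/4) := by
          rw [ENNReal.ofReal_div_of_pos (by norm_num)]
          norm_num
        rw [h2] at h1
        exact (ENNReal.ofReal_le_ofReal_iff (by positivity)).mp h1
      have hsle : s ≤ 8/3 * a := by
        have h1 : s * (3/4) ≤ s * (2 * a * s⁻¹) := mul_le_mul_of_nonneg_left h34 hspos.le
        have h2 : s * (2 * a * s⁻¹) = 2 * a := by
          field_simp
        rw [h2] at h1
        linarith
      have hs2 : s ^ 2 = 2 * Real.pi * (v f) := Real.sq_sqrt (by positivity)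
      have hle2 : 2 * Real.pi * (v f) ≤ (8/3 * a) ^ 2 := by
        rw [← hs2]
        exact pow_le_pow_left₀ hspos.le hsle 2
      have hpi : (1:ℝ) ≤ 2 * Real.pi := by nlinarith [Real.pi_gt_three]
      nlinarith [hvpos.le]
  -- the embedding into L²
  have hmem : ∀ f : W →L[ℝ] ℝ, MemLp (⇑f) 2 μ := fun f =>
    (memLp_two_iff_integrable_sq f.continuous.aestronglyMeasurable).mpr (hInt f)
  have hJinj : Function.Injective (auxJ μ hmem) := by
    intro f g hfg
    have h0 : auxJ μ hmem (f - g) = 0 := by rw [map_sub, hfg, sub_self]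
    have h2 : ∫ x, ((f - g) x) ^ 2 ∂μ = 0 := by
      rw [← auxJ_norm_sq μ hmem, h0, norm_zero]
      ring
    have h3 := hnd (f - g) h2
    rwa [sub_eq_zero] at h3
  have hJle : ∀ f : W →L[ℝ] ℝ, ‖auxJ μ hmem f‖ ≤ Real.sqrt (m * (8/3 * R) ^ 2) * ‖f‖ := by
    intro f
    have h1 : ‖auxJ μ hmem f‖ ^ 2 = m * v f := by rw [auxJ_norm_sq, hI]
    have h2 : m * (v f : ℝ) ≤ (m * (8/3 * R) ^ 2) * ‖f‖ ^ 2 := by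
      have hb := hVB f
      nlinarith [hm0, norm_nonneg f, NNReal.coe_nonneg (v f), sq_nonneg R, sq_nonneg ‖f‖]
    have h3 : ‖auxJ μ hmem f‖ ^ 2 ≤ (Real.sqrt (m * (8/3 * R) ^ 2) * ‖f‖) ^ 2 := by
      rw [mul_pow, Real.sq_sqrt (by positivity), h1]
      exact h2
    have hb0 : 0 ≤ Real.sqrt (m * (8/3 * R) ^ 2) * ‖f‖ := by positivity
    calc ‖auxJ μ hmem f‖ = Real.sqrt (‖auxJ μ hmem f‖ ^ 2) := (Real.sqrt_sq (norm_nonneg _)).symm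
      _ ≤ Real.sqrt ((Real.sqrt (m * (8/3 * R) ^ 2) * ‖f‖) ^ 2) := Real.sqrt_le_sqrt h3
      _ = _ := Real.sqrt_sq hb0
  set H : Submodule ℝ (Lp ℝ 2 μ) := LinearMap.range (auxJ μ hmem) with hH
  haveI hComp : CompleteSpace ↥H := by
    apply Metric.complete_of_cauchySeq_tendsto
    intro u hu
    choose f hf using fun n => (u n).2
    have hcau : ∀ ε > (0:ℝ), ∃ N, ∀ p ≥ N, ∀ q ≥ N, ∫ x, (f p x - f q x) ^ 2 ∂μ < ε := by
      intro ε hε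
      obtain ⟨N, hN⟩ := Metric.cauchySeq_iff.mp hu (Real.sqrt ε) (Real.sqrt_pos.mpr hε)
      refine ⟨N, fun p hp q hq => ?_⟩
      have hd := hN p hp q hq
      have hdist : dist (u p) (u q) = ‖auxJ μ hmem (f p - f q)‖ := by
        rw [Subtype.dist_eq, dist_eq_norm, map_sub, hf p, hf q]
      have h2 : ∫ x, (f p x - f q x) ^ 2 ∂μ = ‖auxJ μ hmem (f p - f q)‖ ^ 2 := by
        rw [auxJ_norm_sq]
        simp only [ContinuousLinearMap.coe_sub', Pi.sub_apply]
      rw [h2, ← Real.sq_sqrt hε.le, ← hdist]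
      exact pow_lt_pow_left₀ hd dist_nonneg two_ne_zero
    obtain ⟨g, hg⟩ := hcomplete f hcau
    refine ⟨⟨auxJ μ hmem g, LinearMap.mem_range_self _ g⟩, ?_⟩
    rw [tendsto_iff_dist_tendsto_zero]
    have heq : ∀ n, dist (u n) (⟨auxJ μ hmem g, LinearMap.mem_range_self _ g⟩ : ↥H)
        = Real.sqrt (∫ x, (f n x - g x) ^ 2 ∂μ) := by
      intro n
      rw [Subtype.dist_eq, dist_eq_norm]
      have : (↑(u n) : Lp ℝ 2 μ) - auxJ μ hmem g = auxJ μ hmem (f n - g) := by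
        rw [map_sub, hf n]
      rw [this, ← Real.sqrt_sq (norm_nonneg _), auxJ_norm_sq]
      congr 1
    have hg2 : Tendsto (fun n => Real.sqrt (∫ x, (f n x - g x) ^ 2 ∂μ)) atTop (𝓝 0) := by
      have := hg.sqrt
      rwa [Real.sqrt_zero] at this
    simp_rw [heq]
    exact hg2
  -- the continuous linear equivalence given by the open mapping theorem
  set Jc : (W →L[ℝ] ℝ) →L[ℝ] Lp ℝ 2 μ :=
    (auxJ μ hmem).mkContinuous (Real.sqrt (m * (8/3 * R) ^ 2)) hJle with hJc
  have hJcap : ∀ f, Jc f = auxJ μ hmem f := fun f => rfl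
  set J' : (W →L[ℝ] ℝ) →L[ℝ] ↥H :=
    Jc.codRestrict H (fun f => LinearMap.mem_range_self _ f) with hJ'
  have hJ'ap : ∀ f, (J' f : Lp ℝ 2 μ) = auxJ μ hmem f := fun f => rfl
  have hker : LinearMap.ker (J' : (W →L[ℝ] ℝ) →ₗ[ℝ] ↥H) = ⊥ := by
    apply LinearMap.ker_eq_bot.mpr
    intro a b hab
    apply hJinj
    have h2 : J' a = J' b := hab
    rw [← hJ'ap, ← hJ'ap, h2]
  have hrange : LinearMap.range (J' : (W →L[ℝ] ℝ) →ₗ[ℝ] ↥H) = ⊤ := by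
    rw [LinearMap.range_eq_top]
    rintro ⟨y, hy⟩
    obtain ⟨g, hg⟩ := hy
    exact ⟨g, Subtype.ext ((hJ'ap g).trans hg)⟩
  set e : (W →L[ℝ] ℝ) ≃L[ℝ] ↥H := ContinuousLinearEquiv.ofBijective J' hker hrange with he
  -- suppose `W` is infinite-dimensional
  by_contra hfd
  have hE : ¬ FiniteDimensional ℝ (W →L[ℝ] ℝ) := by
    intro hfin
    apply hfd
    exact FiniteDimensional.of_injective
      (NormedSpace.inclusionInDoubleDualLi (𝕜 := ℝ) (E := W)).toLinearMap
      (NormedSpace.inclusionInDoubleDualLi (𝕜 := ℝ) (E := W)).injective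
  have hinf : (Module.Basis.ofVectorSpaceIndex ℝ (W →L[ℝ] ℝ)).Infinite := by
    intro hfin
    haveI := hfin.fintype
    exact hE (Module.Finite.of_basis (Module.Basis.ofVectorSpace ℝ (W →L[ℝ] ℝ)))
  set B := Module.Basis.ofVectorSpace ℝ (W →L[ℝ] ℝ) with hB
  set emb := hinf.natEmbedding with hemb
  have li : LinearIndependent ℝ (⇑B ∘ ⇑emb) := B.linearIndependent.comp emb emb.injective
  set u : ℕ → Lp ℝ 2 μ := ⇑(auxJ μ hmem) ∘ (⇑B ∘ ⇑emb) with hu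
  have li2 : LinearIndependent ℝ u := li.map' (auxJ μ hmem) (LinearMap.ker_eq_bot.mpr hJinj)
  set ON : ℕ → Lp ℝ 2 μ := InnerProductSpace.gramSchmidtNormed ℝ u with hON
  have hONorm : Orthonormal ℝ ON := InnerProductSpace.gramSchmidtNormed_orthonormal (𝕜 := ℝ) li2
  have hONmem : ∀ n, ON n ∈ H := by
    intro n
    have h1 : InnerProductSpace.gramSchmidt ℝ u n ∈ Submodule.span ℝ (u '' Set.Iic n) :=
      InnerProductSpace.gramSchmidt_mem_span (𝕜 := ℝ) u (le_refl n)
    have h2 : Submodule.span ℝ (u '' Set.Iic n) ≤ H := by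
      apply Submodule.span_le.mpr
      rintro _ ⟨k, _, rfl⟩
      exact LinearMap.mem_range_self _ _
    rw [hON]
    simp only [InnerProductSpace.gramSchmidtNormed]
    exact Submodule.smul_mem H _ (h2 h1)
  choose φ hφ using fun n => LinearMap.mem_range.mp (hONmem n)
  have hφON : ∀ n, auxJ μ hmem (φ n) = ON n := hφ
  -- pointwise convergence to zero via Bessel's inequality
  have hptw : ∀ x : W, Tendsto (fun n => φ n x) atTop (𝓝 (0:ℝ)) := by
    intro x
    set ℓ : ↥H →L[ℝ] ℝ :=
      (NormedSpace.inclusionInDoubleDual ℝ W x).comp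
        (e.symm : ↥H →L[ℝ] (W →L[ℝ] ℝ)) with hℓ
    set hx : ↥H := (InnerProductSpace.toDual ℝ ↥H).symm ℓ with hhx
    set ξ : ℕ → ↥H := fun n => ⟨ON n, hONmem n⟩ with hξ
    have hξON : Orthonormal ℝ ξ := by
      constructor
      · intro n
        have h1 := hONorm.1 n
        have h2 : ‖ξ n‖ = ‖ON n‖ := rfl
        rw [h2, h1]
      · intro i j hij
        exact hONorm.2 hij
    have hval : ∀ n, φ n x = ⟪ξ n, hx⟫ := by
      intro n
      rw [real_inner_comm, hhx, InnerProductSpace.toDual_symm_apply]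
      have h2 : J' (φ n) = ξ n := Subtype.ext (by rw [hJ'ap, hφON n])
      have h1 : e.symm (ξ n) = φ n := by
        rw [← h2]
        exact ContinuousLinearEquiv.ofBijective_symm_apply_apply J' hker hrange (φ n)
      rw [hℓ]
      simp only [ContinuousLinearMap.comp_apply]
      rw [show ((e.symm : ↥H →L[ℝ] (W →L[ℝ] ℝ)) (ξ n)) = φ n from h1]
      rfl
    have hsum : Summable fun n => ‖⟪ξ n, hx⟫‖ ^ 2 :=
      Orthonormal.inner_products_summable hx hξON
    have h0 := hsum.tendsto_atTop_zero
    have heq : ∀ n, |φ n x| = Real.sqrt (‖⟪ξ n, hx⟫‖ ^ 2) := by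
      intro n
      rw [Real.sqrt_sq (norm_nonneg _), hval n, Real.norm_eq_abs]
    rw [tendsto_zero_iff_abs_tendsto_zero]
    have hfun : (abs ∘ fun n => (φ n) x) = fun n => Real.sqrt (‖⟪ξ n, hx⟫‖ ^ 2) :=
      funext fun n => heq n
    rw [hfun]
    have := h0.sqrt
    rwa [Real.sqrt_zero] at this
  -- each φ n is standard: ∫ (φ n)² = 1, hence all have the same nonzero variance
  have hone : ∀ n, ∫ x, (φ n x) ^ 2 ∂μ = 1 := by
    intro n
    rw [← auxJ_norm_sq μ hmem (φ n), hφON n, hONorm.1 n]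
    norm_num
  have hmv : ∀ n, m * (v (φ n) : ℝ) = 1 := fun n => by rw [← hI (φ n), hone n]
  set w : ℝ≥0 := v (φ 0) with hw
  have hvφ : ∀ n, v (φ n) = w := by
    intro n
    apply NNReal.coe_injective
    exact mul_left_cancel₀ hmpos.ne' ((hmv n).trans (hmv 0).symm)
  have hw0 : w ≠ 0 := by
    intro h
    have := hmv 0
    rw [← hw, h] at this
    simp at this
  -- convergence in measure contradicts the fixed Gaussian distribution
  have htim := tendstoInMeasure_of_tendsto_ae (μ := μ)
    (f := fun n => ⇑(φ n)) (g := fun _ => (0:ℝ))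
    (fun n => (φ n).continuous.aestronglyMeasurable)
    (Filter.Eventually.of_forall hptw)
  have hspec := htim 1 one_pos
  replace hspec : Tendsto (fun n => μ {x | (1:ℝ) ≤ dist (φ n x) ((fun _ => (0:ℝ)) x)}) atTop (𝓝 0) := by
    refine hspec.congr fun n => ?_
    congr 1; ext x; simp [edist_dist, ENNReal.one_le_ofReal]
  set S : Set ℝ := {y : ℝ | 1 ≤ |y|} with hS
  have hSm : MeasurableSet S := by
    apply measurableSet_le measurable_const
    exact continuous_abs.measurable
  have hconst : ∀ n, μ {x | (1:ℝ) ≤ dist (φ n x) ((fun _ => (0:ℝ)) x)}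
      = gaussianReal 0 w S := by
    intro n
    have hset : {x | (1:ℝ) ≤ dist (φ n x) ((fun _ => (0:ℝ)) x)} = ⇑(φ n) ⁻¹' S := by
      ext x'
      simp [hS, Real.dist_0_eq_abs, Set.mem_setOf_eq]
    rw [hset, ← Measure.map_apply (φ n).continuous.measurable hSm, hv (φ n), hvφ n]
  have hδpos : 0 < gaussianReal 0 w S := by
    refine lt_of_lt_of_le (aux_gr_Icc_pos hw0) (measure_mono ?_)
    intro y hy
    obtain ⟨h1, _⟩ := hy
    simp only [hS, Set.mem_setOf_eq]
    rw [abs_of_nonneg (by linarith)]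
    exact h1
  have hEq : (fun n => μ {x | (1:ℝ) ≤ dist (φ n x) ((fun _ => (0:ℝ)) x)})
      = fun _ => gaussianReal 0 w S := funext hconst
  rw [hEq] at hspec
  exact hδpos.ne' (tendsto_nhds_unique hspec tendsto_const_nhds).symm
end

section
/- Let y = (y(1), y(2), ...) be a sequence of real numbers such that the series ∑_{i=1}^∞ y(i)·g(i) converges for every g ∈ ℓ². Then y ∈ ℓ², i.e. ∑_{i=1}^∞ |y(i)|² < ∞. -/
open Filter
open scoped Topology

private lemma memℓp_trunc (y : ℕ → ℝ) (n : ℕ) :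
    Memℓp (fun i => if i < n then y i else 0) 2 := by
  apply memℓp_gen
  apply (summable_of_ne_finset_zero (s := Finset.range n) ?_)
  intro i hi
  simp [Finset.mem_range] at hi
  simp [hi]

/-- If `y` is a real sequence such that `∑ y i * g i` converges for every
square-summable sequence `g`, then `y` is itself square-summable. -/
theorem mem_l2_of_series_converges
    (y : ℕ → ℝ)
    (h : ∀ g : ℕ → ℝ, Summable (fun i => (g i) ^ 2) →
      ∃ L : ℝ, Tendsto (fun n => ∑ i ∈ Finset.range n, y i * g i) atTop (𝓝 L)) :
    Summable fun i => (y i) ^ 2 := by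
  set H := lp (fun _ : ℕ => ℝ) 2
  set v : ℕ → H := fun n => ⟨fun i => if i < n then y i else 0, memℓp_trunc y n⟩ with hv
  set T : ℕ → H →L[ℝ] ℝ := fun n => innerSL ℝ (v n) with hT
  have hTval : ∀ n (g : H), T n g = ∑ i ∈ Finset.range n, y i * g i := by
    intro n g
    have : T n g = ∑' i, (v n : ℕ → ℝ) i * g i := by
      simp only [hT, innerSL_apply_apply]
      rw [lp.inner_eq_tsum]
      simp only [Real.inner_apply]
    rw [this]
    rw [tsum_eq_sum (s := Finset.range n) ?_]
    · apply Finset.sum_congr rfl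
      intro i hi
      simp [Finset.mem_range] at hi
      simp [hv, hi]
    · intro i hi
      simp [Finset.mem_range] at hi
      simp [hv, hi]
  -- pointwise boundedness
  have hbd : ∀ g : H, ∃ C, ∀ n, ‖T n g‖ ≤ C := by
    intro g
    have hg : Summable fun i => (g i : ℝ) ^ 2 := by
      have := lp.memℓp g
      rw [memℓp_gen_iff (by norm_num)] at this
      refine this.congr fun i => ?_
      rw [show ((2 : ENNReal).toReal) = (2 : ℝ) by norm_num,
        Real.rpow_two, Real.norm_eq_abs, sq_abs]
    obtain ⟨L, hL⟩ := h g hg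
    have : Tendsto (fun n => ‖T n g‖) atTop (𝓝 ‖L‖) := by
      have : (fun n => ‖T n g‖) = fun n => ‖∑ i ∈ Finset.range n, y i * g i‖ := by
        funext n; rw [hTval]
      rw [this]
      exact hL.norm
    obtain ⟨C, hC⟩ := this.bddAbove_range
    exact ⟨C, fun n => hC ⟨n, rfl⟩⟩
  obtain ⟨C, hC⟩ := banach_steinhaus hbd
  have hC0 : 0 ≤ C := le_trans (norm_nonneg _) (hC 0)
  -- partial sums bounded by C^2
  apply summable_of_sum_range_le (c := C ^ 2) (fun n => sq_nonneg _)
  intro n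
  have hnorm : ‖v n‖ ^ 2 = ∑ i ∈ Finset.range n, (y i) ^ 2 := by
    rw [← real_inner_self_eq_norm_sq]
    have := hTval n (v n)
    simp only [hT, innerSL_apply_apply] at this
    rw [this]
    apply Finset.sum_congr rfl
    intro i hi
    simp only [Finset.mem_range] at hi
    simp [hv, hi, sq]
  have key : ‖v n‖ ^ 2 ≤ C * ‖v n‖ := by
    have h1 : ‖v n‖ ^ 2 = T n (v n) := by
      simp only [hT, innerSL_apply_apply]
      rw [real_inner_self_eq_norm_sq]
    rw [h1]
    calc T n (v n) ≤ ‖T n (v n)‖ := le_abs_self _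
      _ ≤ ‖T n‖ * ‖v n‖ := (T n).le_opNorm _
      _ ≤ C * ‖v n‖ := by gcongr; exact hC n
  rw [← hnorm]
  nlinarith [norm_nonneg (v n), sq_nonneg (‖v n‖ - C)]
end

section
/- Let (X_n) be a sequence of real random variables with X_n distributed as a centered Gaussian N(0, σ_n²) (allowing σ_n = 0, in which case X_n is the constant 0), and suppose X_n converges in distribution to a real random variable X. Then the limit σ² = lim_{n→∞} σ_n² exists and is finite, and X is distributed as N(0, σ²), i.e. X is a centered Gaussian (possibly degenerate) random variable with variance σ². -/
open MeasureTheory ProbabilityTheory Filter Real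
open scoped ENNReal NNReal Topology BoundedContinuousFunction

noncomputable def gexp : ℝ →ᵇ ℝ :=
  BoundedContinuousFunction.ofNormedAddCommGroup (fun x => Real.exp (-x^2/2))
    (by continuity) 1 (fun x => by
      rw [Real.norm_eq_abs, abs_of_pos (Real.exp_pos _)]
      exact Real.exp_le_one_iff.mpr (by nlinarith [sq_nonneg x]))

lemma gexp_apply (x : ℝ) : gexp x = Real.exp (-x^2/2) := rfl

lemma intA (t : ℝ≥0) :
    ∫ x, Real.exp (-x^2/2) ∂(gaussianReal 0 t) = (Real.sqrt (1 + t))⁻¹ := by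
  by_cases ht : t = 0
  · simp [ht, gaussianReal_zero_var]
  · have hc : (0:ℝ) < t := lt_of_le_of_ne t.2 (by exact_mod_cast (Ne.symm ht))
    set c : ℝ := (t : ℝ) with hcdef
    rw [gaussianReal_of_var_ne_zero 0 ht]
    have hmeas : Measurable (fun x => (gaussianPDFReal 0 t x).toNNReal) :=
      (measurable_gaussianPDFReal 0 t).real_toNNReal
    have hpdf : gaussianPDF 0 t = fun x => ((gaussianPDFReal 0 t x).toNNReal : ℝ≥0∞) := rfl
    rw [hpdf, integral_withDensity_eq_integral_smul hmeas]
    have hb : (0:ℝ) < (1+c)/(2*c) := by positivity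
    have hsm : ∀ x : ℝ, (gaussianPDFReal 0 t x).toNNReal • Real.exp (-x^2/2)
        = (Real.sqrt (2 * π * c))⁻¹ * Real.exp (-((1+c)/(2*c)) * x^2) := by
      intro x
      rw [NNReal.smul_def, Real.coe_toNNReal _ (gaussianPDFReal_nonneg 0 t x)]
      show (√(2 * π * c))⁻¹ * rexp (-(x - 0)^2/(2*c)) * rexp (-x^2/2) = _
      rw [mul_assoc, ← Real.exp_add]
      congr 1
      rw [sub_zero]
      field_simp
      ring
    simp_rw [hsm]
    rw [integral_const_mul, integral_gaussian]
    rw [← Real.sqrt_inv, ← Real.sqrt_inv, ← Real.sqrt_mul (by positivity)]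
    congr 1
    field_simp

lemma intB (t : ℝ≥0) (f : ℝ →ᵇ ℝ) :
    ∫ x, f x ∂(gaussianReal 0 t) = ∫ x, f (Real.sqrt t * x) ∂(gaussianReal 0 1) := by
  have hmap : (gaussianReal 0 1).map (fun x => Real.sqrt t * x) = gaussianReal 0 t := by
    have h := gaussianReal_map_const_mul (μ := 0) (v := 1) (Real.sqrt t)
    have h2 : (⟨(Real.sqrt t)^2, sq_nonneg _⟩ : ℝ≥0) * 1 = t := by
      ext; simp [Real.sq_sqrt t.2]
    rw [mul_zero] at h
    rw [h]
    congr 1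
  rw [← hmap, integral_map ((measurable_const_mul _).aemeasurable)
    (f.continuous.aestronglyMeasurable)]

lemma intC {w : ℕ → ℝ≥0} {W : ℝ≥0} (hw : Filter.Tendsto w atTop (𝓝 W)) (f : ℝ →ᵇ ℝ) :
    Filter.Tendsto (fun n => ∫ x, f x ∂(gaussianReal 0 (w n))) atTop
      (𝓝 (∫ x, f x ∂(gaussianReal 0 W))) := by
  simp_rw [intB _ f]
  apply tendsto_integral_of_dominated_convergence (fun _ => ‖f‖)
  · intro n
    exact (f.continuous.comp (continuous_const.mul continuous_id)).aestronglyMeasurable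
  · exact integrable_const _
  · intro n
    exact .of_forall fun x => f.norm_coe_le_norm _
  · apply Filter.Eventually.of_forall
    intro x
    have h1 : Filter.Tendsto (fun n => ((w n : ℝ))) atTop (𝓝 (W : ℝ)) :=
      NNReal.tendsto_coe.mpr hw
    have h2 := ((Real.continuous_sqrt.tendsto _).comp h1).mul_const x
    exact (f.continuous.tendsto _).comp h2


/-- If a sequence of centered Gaussian laws `N(0, σₙ²)` (degenerate variance allowed)
converges weakly to the law `ν` of a finite random variable, then `σ² = lim σₙ²`
exists (and is finite) and `ν = N(0, σ²)` is a centered Gaussian law. -/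
theorem weak_limit_of_gaussians_is_gaussian
    (v : ℕ → ℝ≥0) (ν : Measure ℝ) [IsProbabilityMeasure ν]
    (hconv : ∀ f : ℝ →ᵇ ℝ,
      Tendsto (fun n => ∫ x, f x ∂(gaussianReal 0 (v n))) atTop (𝓝 (∫ x, f x ∂ν))) :
    ∃ V : ℝ≥0, Tendsto v atTop (𝓝 V) ∧ ν = gaussianReal 0 V := by
  set L : ℝ := ∫ x, gexp x ∂ν with hLdef
  have hconvg := hconv gexp
  have h1 : Tendsto (fun n => (Real.sqrt (1 + (v n : ℝ)))⁻¹) atTop (𝓝 L) := by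
    have : ∀ n, ∫ x, gexp x ∂(gaussianReal 0 (v n)) = (Real.sqrt (1 + (v n : ℝ)))⁻¹ := by
      intro n; simp_rw [gexp_apply]; exact intA (v n)
    simpa [this] using hconvg
  -- L > 0
  have hLpos : 0 < L := by
    rw [hLdef]
    rw [integral_pos_iff_support_of_nonneg (f := fun x => gexp x)
      (fun x => le_of_lt (Real.exp_pos _)) (gexp.integrable ν)]
    have hsupp : Function.support (fun x => gexp x) = Set.univ := by
      ext x; simp [gexp_apply, (Real.exp_pos _).ne']
    rw [hsupp]
    simp
  -- L ≤ 1
  have hLle : L ≤ 1 := by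
    apply le_of_tendsto' h1
    intro n
    have h1le : 1 ≤ Real.sqrt (1 + (v n : ℝ)) :=
      Real.one_le_sqrt.mpr (by nlinarith [(v n).coe_nonneg])
    exact inv_le_one_of_one_le₀ h1le
  have hLne : L ≠ 0 := hLpos.ne'
  have h2 : Tendsto (fun n => Real.sqrt (1 + (v n : ℝ))) atTop (𝓝 L⁻¹) := by
    have := h1.inv₀ hLne
    simpa [inv_inv] using this
  have h3 : Tendsto (fun n => (1 + (v n : ℝ))) atTop (𝓝 (L⁻¹ ^ 2)) := by
    have hmul := h2.mul h2
    have heq : ∀ n, Real.sqrt (1 + (v n : ℝ)) * Real.sqrt (1 + (v n : ℝ))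
        = 1 + (v n : ℝ) := fun n => Real.mul_self_sqrt (by positivity)
    simpa [heq, sq] using hmul
  have h4 : Tendsto (fun n => ((v n : ℝ))) atTop (𝓝 (L⁻¹ ^ 2 - 1)) := by
    have := h3.sub_const 1
    simpa using this
  have hVnn : 0 ≤ L⁻¹ ^ 2 - 1 := by
    have h1L : 1 ≤ L⁻¹ := (one_le_inv₀ hLpos).mpr hLle
    nlinarith
  refine ⟨⟨L⁻¹ ^ 2 - 1, hVnn⟩, ?_, ?_⟩
  · exact NNReal.tendsto_coe.mp h4
  · set V : ℝ≥0 := ⟨L⁻¹ ^ 2 - 1, hVnn⟩ with hVdef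
    have hVt : Tendsto v atTop (𝓝 V) := NNReal.tendsto_coe.mp h4
    let P : ProbabilityMeasure ℝ := ⟨ν, inferInstance⟩
    let Q : ProbabilityMeasure ℝ := ⟨gaussianReal 0 V, inferInstance⟩
    let μs : ℕ → ProbabilityMeasure ℝ := fun n => ⟨gaussianReal 0 (v n), inferInstance⟩
    have hP : Tendsto μs atTop (𝓝 P) :=
      ProbabilityMeasure.tendsto_iff_forall_integral_tendsto.mpr hconv
    have hQ : Tendsto μs atTop (𝓝 Q) :=
      ProbabilityMeasure.tendsto_iff_forall_integral_tendsto.mpr (fun f => intC hVt f)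
    have : P = Q := tendsto_nhds_unique hP hQ
    exact congrArg ProbabilityMeasure.toMeasure this
end

section
/- Let W be a separable Banach space. Then there exist a separable Hilbert space H and a continuous injective linear map ι : H → W whose range is dense in W; i.e. W contains a densely and continuously embedded separable Hilbert space. -/
open TopologicalSpace

noncomputable section

lemma l2_nat_real_separable :
    TopologicalSpace.SeparableSpace (lp (fun _ : ℕ => ℝ) 2) := by
  classical
  set s : Set (lp (fun _ : ℕ => ℝ) 2) :=
    Set.range (fun n : ℕ => lp.single 2 n (1 : ℝ)) with hs_def
  have hs : s.Countable := Set.countable_range _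
  have hsep : IsSeparable (Submodule.span ℝ s : Set (lp (fun _ : ℕ => ℝ) 2)) :=
    hs.isSeparable.span
  have hdense : Dense (Submodule.span ℝ s : Set (lp (fun _ : ℕ => ℝ) 2)) := by
    intro f
    have hsum : HasSum (fun i : ℕ => lp.single 2 i (f i)) f :=
      lp.hasSum_single (by norm_num) f
    refine mem_closure_of_tendsto hsum (Filter.Eventually.of_forall ?_)
    intro t
    refine Submodule.sum_mem _ fun i _ => ?_
    have h := lp.single_smul (E := fun _ : ℕ => ℝ) 2 i (f i) (1 : ℝ)
    rw [show (f i • (1:ℝ)) = f i by simp] at h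
    rw [h]
    exact Submodule.smul_mem _ _ (Submodule.subset_span ⟨i, rfl⟩)
  have h1 : IsSeparable (closure (Submodule.span ℝ s : Set (lp (fun _ : ℕ => ℝ) 2))) :=
    hsep.closure
  rw [hdense.closure_eq] at h1
  exact isSeparable_univ_iff.mp h1

/-- Every separable Banach space contains a densely and continuously embedded
separable Hilbert space: there is a separable Hilbert space `H` and a continuous
injective linear map `ι : H → W` with dense range. -/
theorem exists_dense_hilbert_embedding
    (W : Type*) [NormedAddCommGroup W] [NormedSpace ℝ W] [CompleteSpace W]
    [TopologicalSpace.SeparableSpace W] :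
    ∃ (H : Type) (_ : NormedAddCommGroup H) (_ : InnerProductSpace ℝ H),
      CompleteSpace H ∧ TopologicalSpace.SeparableSpace H ∧
      ∃ ι : H →L[ℝ] W, Function.Injective ι ∧ DenseRange ι := by
  classical
  have : Nonempty W := ⟨0⟩
  obtain ⟨x, hx⟩ := TopologicalSpace.exists_dense_seq W
  -- scaling constants
  set c : ℕ → ℝ := fun n => ((2 : ℝ) ^ n * (‖x n‖ + 1))⁻¹ with hc_def
  have hcpos : ∀ n, 0 < c n := fun n =>
    inv_pos.mpr (mul_pos (pow_pos two_pos n) (by positivity))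
  set y : ℕ → W := fun n => c n • x n with hy_def
  have hy : ∀ n, ‖y n‖ ≤ (1 / 2 : ℝ) ^ n := by
    intro n
    have h1 : ‖y n‖ = c n * ‖x n‖ := by
      rw [hy_def]; simp [norm_smul, abs_of_pos (hcpos n)]
    have hcn : c n = ((2:ℝ)^n)⁻¹ * (‖x n‖ + 1)⁻¹ := by
      simp only [hc_def]; rw [mul_inv]
    rw [h1, hcn]
    have h2 : ‖x n‖ / (‖x n‖ + 1) ≤ 1 := by
      rw [div_le_one (by positivity)]; linarith
    calc ((2:ℝ)^n)⁻¹ * (‖x n‖ + 1)⁻¹ * ‖x n‖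
        = ((2:ℝ)^n)⁻¹ * (‖x n‖ / (‖x n‖ + 1)) := by ring
      _ ≤ ((2:ℝ)^n)⁻¹ * 1 := by
          exact mul_le_mul_of_nonneg_left h2 (by positivity)
      _ = (1/2:ℝ)^n := by rw [mul_one, one_div, inv_pow]
  -- the Hilbert space ℓ²
  set X := lp (fun _ : ℕ => ℝ) 2 with hX_def
  set e : ℕ → X := fun n => lp.single 2 n (1 : ℝ) with he_def
  -- the family of rank-one operators
  set f : ℕ → (X →L[ℝ] W) := fun n => (innerSL ℝ (e n)).smulRight (y n) with hf_def
  have hnorm_e : ∀ n, ‖e n‖ = 1 := by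
    intro n
    have := lp.norm_single (E := fun _ : ℕ => ℝ) (p := 2) (by norm_num)
      n (1 : ℝ)
    exact this.trans norm_one
  have hfnorm : ∀ n, ‖f n‖ ≤ (1 / 2 : ℝ) ^ n := by
    intro n
    rw [hf_def]
    rw [ContinuousLinearMap.norm_smulRight_apply]
    have h1 : ‖innerSL ℝ (e n)‖ = ‖e n‖ := innerSL_apply_norm ℝ (e n)
    rw [h1, hnorm_e n, one_mul]
    exact hy n
  have hsum : Summable f := by
    refine Summable.of_norm_bounded summable_geometric_two ?_
    intro n
    simpa using hfnorm n
  set T : X →L[ℝ] W := ∑' n, f n with hT_def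
  have hT : HasSum f T := hsum.hasSum
  have hT_apply : ∀ v : X, HasSum (fun n => f n v) (T v) := by
    intro v
    exact hT.mapL (ContinuousLinearMap.apply ℝ W v)
  -- T (e n) = y n
  have hTe : ∀ n, T (e n) = y n := by
    intro n
    have h1 : HasSum (fun m => f m (e n)) (T (e n)) := hT_apply (e n)
    have h2 : (fun m => f m (e n)) = fun m => if m = n then y n else 0 := by
      funext m
      simp only [hf_def, ContinuousLinearMap.smulRight_apply, innerSL_apply_apply, he_def]
      rw [lp.inner_single_left]
      by_cases hmn : m = n
      · subst hmn
        rw [lp.single_apply_self]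
        simp [RCLike.inner_apply]
      · rw [lp.single_apply_ne 2 n _ hmn]
        simp [hmn, RCLike.inner_apply]
    rw [h2] at h1
    have h3 : HasSum (fun m => if m = n then y n else 0) (y n) := hasSum_ite_eq n (y n)
    exact h1.unique h3
  -- the kernel and its orthogonal complement
  set K : Submodule ℝ X := LinearMap.ker (T : X →ₗ[ℝ] W) with hK_def
  have hKclosed : IsClosed (K : Set X) := ContinuousLinearMap.isClosed_ker T
  haveI : CompleteSpace K := hKclosed.completeSpace_coe
  refine ⟨Kᗮ, inferInstance, inferInstance, ?_, ?_, ?_⟩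
  · exact K.isClosed_orthogonal.completeSpace_coe
  · haveI : TopologicalSpace.SeparableSpace X := l2_nat_real_separable
    haveI : SecondCountableTopology X := UniformSpace.secondCountable_of_separable X
    infer_instance
  · refine ⟨T.comp Kᗮ.subtypeL, ?_, ?_⟩
    · -- injectivity
      intro a b hab
      have h1 : ((a : X) - (b : X)) ∈ K := by
        have hTT : T ((a : X) - (b : X)) = 0 := by
          have : T (a : X) = T (b : X) := hab
          simp [map_sub, this]
        exact LinearMap.mem_ker.mpr hTT
      have h2 : ((a : X) - (b : X)) ∈ Kᗮ := sub_mem a.2 b.2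
      have h3 : ((a : X) - (b : X)) ∈ (⊥ : Submodule ℝ X) :=
        K.orthogonal_disjoint.le_bot ⟨h1, h2⟩
      rw [Submodule.mem_bot, sub_eq_zero] at h3
      exact Subtype.ext h3
    · -- dense range
      have hsub : Set.range x ⊆ Set.range (T.comp Kᗮ.subtypeL) := by
        rintro - ⟨n, rfl⟩
        -- x n = T ((c n)⁻¹ • e n)
        set v : X := (c n)⁻¹ • e n with hv_def
        have hTv : T v = x n := by
          rw [hv_def, map_smul, hTe n, hy_def]
          rw [smul_smul, inv_mul_cancel₀ (hcpos n).ne', one_smul]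
        obtain ⟨k, hk, h, hh, hkh⟩ := K.exists_add_mem_mem_orthogonal v
        refine ⟨⟨h, hh⟩, ?_⟩
        have : T v = T k + T h := by rw [hkh, map_add]
        rw [hTv] at this
        have hTk : T k = 0 := LinearMap.mem_ker.mp hk
        simp only [ContinuousLinearMap.comp_apply, Submodule.subtypeL_apply]
        rw [this, hTk, zero_add]
      intro w
      exact (hx.mono hsub) w
end
end
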